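/- arXiv:0909.3940 — 4 statements merged into one kernel-verified Lean document; each statement's English description precedes it below -/
import Mathlib

section
/- Let 𝒜 and ℬ be monoidal categories and let f_*, g_*, h_* : 𝒜 ⥤ ℬ be functors admitting left adjoints f^*, g^*, h^* : ℬ ⥤ 𝒜. Then there is a bijection between cup-pairings f_* ∪ g_* → h_* (families of morphisms f_*A ⊗ g_*B ⟶ h_*(A ⊗ B), natural in A, B ∈ 𝒜) and cap-pairings h^* → f^* ∩ g^* (families of morphisms h^*(X ⊗ Y) ⟶ f^*X ⊗ g^*Y, natural in X, Y ∈ ℬ). Concretely, a cup-pairing η is sent to the cap-pairing obtained as the adjoint (under h^* ⊣ h_*) of the composite X ⊗ Y → f_*f^*X ⊗ g_*g^*Y → h_*(f^*X ⊗ g^*Y), where the first map is the tensor product of the adjunction units and the second is η; the inverse construction is given by the dual ('adjoint') procedure, and these two constructions are mutually inverse. -/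
/-!
STATEMENT 0: For monoidal categories `𝒜`, `ℬ` and functors `f_*, g_*, h_* : 𝒜 ⥤ ℬ` with
left adjoints `f^*, g^*, h^* : ℬ ⥤ 𝒜`, there is a bijection between cup-pairings
`f_* ∪ g_* → h_*` and cap-pairings `h^* → f^* ∩ g^*`, sending a cup-pairing `η` to the
cap-pairing adjoint (under `h^* ⊣ h_*`) to the composite
`X ⊗ Y → f_*f^*X ⊗ g_*g^*Y → h_*(f^*X ⊗ g^*Y)`.
-/

open CategoryTheory MonoidalCategory

universe v₁ v₂ u₁ u₂

variable {A : Type u₁} {B : Type u₂} [Category.{v₁} A] [Category.{v₂} B]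
  [MonoidalCategory A] [MonoidalCategory B]

/-- A cup-pairing of functors `f ∪ g → h`: a family of morphisms
`f A ⊗ g B ⟶ h (A ⊗ B)` natural in the pair `(A, B)`. -/
structure CupPairing (f g h : A ⥤ B) where
  app : ∀ X Y : A, f.obj X ⊗ g.obj Y ⟶ h.obj (X ⊗ Y)
  naturality : ∀ {X X' Y Y' : A} (a : X ⟶ X') (b : Y ⟶ Y'),
    (f.map a ⊗ₘ g.map b) ≫ app X' Y' = app X Y ≫ h.map (a ⊗ₘ b)

/-- A cap-pairing of functors `h → f ∩ g`: a family of morphisms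
`h (X ⊗ Y) ⟶ f X ⊗ g Y` natural in the pair `(X, Y)`. -/
structure CapPairing (f g h : B ⥤ A) where
  app : ∀ X Y : B, h.obj (X ⊗ Y) ⟶ f.obj X ⊗ g.obj Y
  naturality : ∀ {X X' Y Y' : B} (a : X ⟶ X') (b : Y ⟶ Y'),
    h.map (a ⊗ₘ b) ≫ app X' Y' = app X Y ≫ (f.map a ⊗ₘ g.map b)


theorem CupPairing.ext' {f g h : A ⥤ B} {x y : CupPairing f g h}
    (w : x.app = y.app) : x = y := by
  cases x; cases y; cases w; rfl

theorem CapPairing.ext' {f g h : B ⥤ A} {x y : CapPairing f g h}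
    (w : x.app = y.app) : x = y := by
  cases x; cases y; cases w; rfl

section Aux

variable (fs gs hs : A ⥤ B) (fStar gStar hStar : B ⥤ A)
  (adjF : fStar ⊣ fs) (adjG : gStar ⊣ gs) (adjH : hStar ⊣ hs)

/-- The cap-pairing associated to a cup-pairing. -/
noncomputable def CupPairing.toCap (η : CupPairing fs gs hs) :
    CapPairing fStar gStar hStar where
  app X Y := (adjH.homEquiv (X ⊗ Y) (fStar.obj X ⊗ gStar.obj Y)).symm
    ((adjF.unit.app X ⊗ₘ adjG.unit.app Y) ≫ η.app (fStar.obj X) (gStar.obj Y))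
  naturality {X X' Y Y'} a b := by
    rw [← Adjunction.homEquiv_naturality_left_symm,
      ← Adjunction.homEquiv_naturality_right_symm]
    congr 1
    rw [← Category.assoc, tensorHom_comp_tensorHom, ← adjF.unit_naturality, ← adjG.unit_naturality,
      ← tensorHom_comp_tensorHom, Category.assoc, η.naturality, Category.assoc]

/-- The cup-pairing associated to a cap-pairing. -/
noncomputable def CapPairing.toCup (ε : CapPairing fStar gStar hStar) :
    CupPairing fs gs hs where
  app X Y := adjH.homEquiv (fs.obj X ⊗ gs.obj Y) (X ⊗ Y)
    (ε.app (fs.obj X) (gs.obj Y) ≫ (adjF.counit.app X ⊗ₘ adjG.counit.app Y))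
  naturality {X X' Y Y'} a b := by
    rw [← Adjunction.homEquiv_naturality_left,
      ← Adjunction.homEquiv_naturality_right]
    congr 1
    rw [← Category.assoc, ε.naturality, Category.assoc, Category.assoc, tensorHom_comp_tensorHom,
      adjF.counit_naturality, adjG.counit_naturality, ← tensorHom_comp_tensorHom]

theorem CupPairing.toCap_toCup (η : CupPairing fs gs hs) :
    (η.toCap fs gs hs fStar gStar hStar adjF adjG adjH).toCup
      fs gs hs fStar gStar hStar adjF adjG adjH = η := by
  rcases η with ⟨app, nat⟩
  apply CupPairing.ext'
  funext X Y
  simp only [CapPairing.toCup, CupPairing.toCap, Adjunction.homEquiv_unit,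
    Adjunction.homEquiv_counit, Functor.map_comp, Category.assoc]
  simp only [Adjunction.unit_naturality_assoc, Adjunction.right_triangle_components_assoc]
  rw [← nat, ← Category.assoc, tensorHom_comp_tensorHom, adjF.right_triangle_components,
    adjG.right_triangle_components, id_tensorHom_id, Category.id_comp]

theorem CapPairing.toCup_toCap (ε : CapPairing fStar gStar hStar) :
    (ε.toCup fs gs hs fStar gStar hStar adjF adjG adjH).toCap
      fs gs hs fStar gStar hStar adjF adjG adjH = ε := by
  rcases ε with ⟨app, nat⟩
  apply CapPairing.ext'
  funext X Y
  simp only [CapPairing.toCup, CupPairing.toCap, Adjunction.homEquiv_unit,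
    Adjunction.homEquiv_counit, Functor.map_comp, Category.assoc]
  erw [adjH.counit_naturality]
  erw [adjH.counit_naturality_assoc]
  erw [adjH.left_triangle_components_assoc]
  rw [← Category.assoc]
  erw [nat]
  rw [Category.assoc, tensorHom_comp_tensorHom, adjF.left_triangle_components,
    adjG.left_triangle_components, id_tensorHom_id, Category.comp_id]

end Aux

theorem cupPairing_equiv_capPairing
    (fs gs hs : A ⥤ B) (fStar gStar hStar : B ⥤ A)
    (adjF : fStar ⊣ fs) (adjG : gStar ⊣ gs) (adjH : hStar ⊣ hs) :
    ∃ e : CupPairing fs gs hs ≃ CapPairing fStar gStar hStar,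
      ∀ (η : CupPairing fs gs hs) (X Y : B),
        (e η).app X Y =
          (adjH.homEquiv (X ⊗ Y) (fStar.obj X ⊗ gStar.obj Y)).symm
            ((adjF.unit.app X ⊗ₘ adjG.unit.app Y) ≫ η.app (fStar.obj X) (gStar.obj Y)) := by
  exact ⟨{ toFun := fun η => η.toCap fs gs hs fStar gStar hStar adjF adjG adjH
           invFun := fun ε => ε.toCup fs gs hs fStar gStar hStar adjF adjG adjH
           left_inv := fun η => η.toCap_toCup fs gs hs fStar gStar hStar adjF adjG adjH
           right_inv := fun ε => ε.toCup_toCap fs gs hs fStar gStar hStar adjF adjG adjH },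
    fun η X Y => rfl⟩
end

section
/- Let (C, J) be a small site and let F be a sheaf of abelian groups on (C, J). Define the tensor product of two abelian sheaves as the sheafification of the objectwise tensor product of their underlying presheaves. Then F is flat (the functor F ⊗ − preserves monomorphisms in the category of abelian sheaves) if and only if F is torsion-free (for every integer n ≥ 1 the multiplication-by-n endomorphism n : F → F is a monomorphism of sheaves). -/
/-!
STATEMENT 4: For a sheaf of abelian groups `F` on a small site `(C, J)`, with the tensor
product of abelian sheaves defined as the sheafification of the objectwise tensor product
of the underlying presheaves, `F` is flat (tensoring with `F` preserves monomorphisms of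
sheaves) if and only if `F` is torsion-free (multiplication by every integer `n ≥ 1` is a
monomorphism of sheaves `F → F`).
-/

open CategoryTheory Limits Opposite

universe u

variable {C : Type u} [SmallCategory C]

/-- The objectwise tensor product (over `ℤ`) of two presheaves of abelian groups. -/
noncomputable def presheafTensorObj (P Q : Cᵒᵖ ⥤ AddCommGrpCat.{u}) : Cᵒᵖ ⥤ AddCommGrpCat.{u} where
  obj U := AddCommGrpCat.of (TensorProduct ℤ (P.obj U) (Q.obj U))
  map f := AddCommGrpCat.ofHom
    (TensorProduct.map (P.map f).hom.toIntLinearMap (Q.map f).hom.toIntLinearMap).toAddMonoidHom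
  map_id U := by
    ext x
    refine TensorProduct.induction_on x (by simp) (fun a b => by simp)
      (fun a b ha hb => by simp only [map_add, ha, hb])
  map_comp f g := by
    ext x
    refine TensorProduct.induction_on x (by simp) (fun a b => ?_)
      (fun a b ha hb => by simp only [map_add, ha, hb])
    show (P.map (f ≫ g)) a ⊗ₜ[ℤ] (Q.map (f ≫ g)) b
        = (P.map g) ((P.map f) a) ⊗ₜ[ℤ] (Q.map g) ((Q.map f) b)
    simp

/-- The morphism of presheaves `P ⊗ Q ⟶ P ⊗ R` induced by `f : Q ⟶ R`. -/
noncomputable def presheafTensorMap (P : Cᵒᵖ ⥤ AddCommGrpCat.{u}) {Q R : Cᵒᵖ ⥤ AddCommGrpCat.{u}}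
    (f : Q ⟶ R) : presheafTensorObj P Q ⟶ presheafTensorObj P R where
  app U := AddCommGrpCat.ofHom
    (TensorProduct.map (AddMonoidHom.id _).toIntLinearMap (f.app U).hom.toIntLinearMap).toAddMonoidHom
  naturality U V g := by
    ext x
    refine TensorProduct.induction_on x (by exact (map_zero _).trans (map_zero _).symm) (fun a b => ?_)
      (fun a b ha hb => by
        exact (map_add _ a b).trans ((congrArg₂ (· + ·) ha hb).trans (map_add _ a b).symm))
    show (P.map g) a ⊗ₜ[ℤ] (f.app V) ((Q.map g) b)
        = (P.map g) a ⊗ₜ[ℤ] (R.map g) ((f.app U) b)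
    exact congrArg₂ (· ⊗ₜ[ℤ] ·) rfl (ConcreteCategory.congr_hom (f.naturality g) b)

variable (J : GrothendieckTopology C)

/-- The tensor product of two abelian sheaves: the sheafification of the objectwise
tensor product of the underlying presheaves. -/
noncomputable def sheafTensorObj (F G : Sheaf J AddCommGrpCat.{u}) : Sheaf J AddCommGrpCat.{u} :=
  (presheafToSheaf J AddCommGrpCat.{u}).obj (presheafTensorObj F.val G.val)

/-- The morphism of abelian sheaves `F ⊗ G ⟶ F ⊗ H` induced by `f : G ⟶ H`. -/
noncomputable def sheafTensorMap (F : Sheaf J AddCommGrpCat.{u}) {G H : Sheaf J AddCommGrpCat.{u}}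
    (f : G ⟶ H) : sheafTensorObj J F G ⟶ sheafTensorObj J F H :=
  (presheafToSheaf J AddCommGrpCat.{u}).map (presheafTensorMap F.val f.hom)

/-- An abelian sheaf is flat if tensoring with it preserves monomorphisms of sheaves. -/
def SheafFlat (F : Sheaf J AddCommGrpCat.{u}) : Prop :=
  ∀ ⦃G H : Sheaf J AddCommGrpCat.{u}⦄ (f : G ⟶ H), Mono f → Mono (sheafTensorMap J F f)

/-- An abelian sheaf is torsion-free if multiplication by every integer `n ≥ 1` is a
monomorphism of sheaves `F → F`. -/
def SheafTorsionFree (F : Sheaf J AddCommGrpCat.{u}) : Prop :=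
  ∀ n : ℤ, 1 ≤ n → Mono (n • 𝟙 F)


/-! ### Auxiliary machinery for the proof -/

namespace SheafFlatAux

open TensorProduct

/-- A torsion-free abelian group is a flat `ℤ`-module. -/
lemma flat_of_torsionFree {M : Type*} [AddCommGroup M]
    (h : ∀ n : ℤ, 0 < n → Function.Injective fun m : M => n • m) : Module.Flat ℤ M := by
  have h' : ∀ a : ℤ, a ≠ 0 → Function.Injective fun m : M => a • m := by
    intro a ha
    rcases lt_or_gt_of_ne ha with hlt | hgt
    · intro m₁ m₂ hm
      refine h (-a) (by omega) ?_
      simp only [neg_smul]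
      simpa using congrArg Neg.neg hm
    · exact h a hgt
  rw [Module.Flat.iff_rTensor_injective]
  intro I _
  obtain ⟨a, rfl⟩ : ∃ a : ℤ, I = Ideal.span {a} := ⟨_, (Ideal.span_singleton_generator I).symm⟩
  by_cases ha : a = 0
  · subst ha
    have hbot : Ideal.span ({(0 : ℤ)} : Set ℤ) = ⊥ := by simp
    intro x y hxy
    haveI : Subsingleton (Ideal.span ({(0 : ℤ)} : Set ℤ)) := by
      rw [hbot]; infer_instance
    exact Subsingleton.elim x y
  · set I := Ideal.span ({a} : Set ℤ) with hI
    have hmem : a ∈ I := Ideal.subset_span rfl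
    set f : ℤ →ₗ[ℤ] I := LinearMap.toSpanSingleton ℤ I ⟨a, hmem⟩ with hfdef
    have hf : Function.Surjective f := by
      rintro ⟨z, hz⟩
      obtain ⟨k, hk⟩ := Ideal.mem_span_singleton'.mp hz
      exact ⟨k, Subtype.ext (by simp [hfdef, LinearMap.toSpanSingleton_apply, smul_eq_mul, hk])⟩
    have hcomp : I.subtype ∘ₗ f = a • (LinearMap.id (R := ℤ) (M := ℤ)) := by
      ext k
      simp [hfdef, LinearMap.toSpanSingleton_apply, smul_eq_mul, mul_comm]
    have hinj : Function.Injective (LinearMap.rTensor M (I.subtype ∘ₗ f)) := by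
      rw [hcomp, LinearMap.rTensor_smul, LinearMap.rTensor_id]
      intro x y hxy
      simp only [LinearMap.smul_apply, LinearMap.id_apply] at hxy
      apply (TensorProduct.lid ℤ M).injective
      apply h' a ha
      simpa only [map_smul] using congrArg (TensorProduct.lid ℤ M) hxy
    rw [LinearMap.rTensor_comp] at hinj
    exact Function.Injective.of_comp_right hinj (LinearMap.rTensor_surjective M hf)

/-- A morphism of abelian sheaves is a monomorphism iff it is objectwise injective. -/
lemma sheafMono_iff {P Q : Sheaf J AddCommGrpCat.{u}} (f : P ⟶ Q) :
    Mono f ↔ ∀ U : Cᵒᵖ, Function.Injective (f.hom.app U) := by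
  rw [Sheaf.Hom.mono_iff_presheaf_mono, NatTrans.mono_iff_mono_app]
  exact forall_congr' fun U => AddCommGrpCat.mono_iff_injective (f.hom.app U)

lemma torsionFree_objectwise {F : Sheaf J AddCommGrpCat.{u}} (hF : SheafTorsionFree J F)
    (U : Cᵒᵖ) (n : ℤ) (hn : 0 < n) :
    Function.Injective fun m : F.val.obj U => n • m := by
  have h := (sheafMono_iff J (n • 𝟙 F)).mp (hF n (by omega)) U
  intro a b hab
  exact h hab

/-- Torsion-free sheaves are flat. -/
theorem flat_of_sheafTorsionFree {F : Sheaf J AddCommGrpCat.{u}} (hF : SheafTorsionFree J F) :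
    SheafFlat J F := by
  intro G H f hf
  haveI : ∀ U : Cᵒᵖ, Module.Flat ℤ (F.val.obj U) :=
    fun U => flat_of_torsionFree (fun n hn => torsionFree_objectwise J hF U n hn)
  have hinj : ∀ U, Function.Injective (f.hom.app U) := (sheafMono_iff J f).mp hf
  haveI : ∀ (X : Cᵒᵖ), Mono ((presheafTensorMap F.val f.hom).app X) := by
    intro U
    rw [AddCommGrpCat.mono_iff_injective]
    have e : (AddMonoidHom.id ((F.val.obj U) : Type u)).toIntLinearMap
        = (LinearMap.id : (F.val.obj U : Type u) →ₗ[ℤ] F.val.obj U) := rfl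
    have hli : Function.Injective
        (LinearMap.lTensor (F.val.obj U : Type u) ((f.hom.app U).hom.toIntLinearMap)) :=
      Module.Flat.lTensor_preserves_injective_linearMap _ (hinj U)
    exact hli
  haveI : Mono (presheafTensorMap F.val f.hom) := NatTrans.mono_of_mono_app _
  haveI : PreservesLimitsOfShape WalkingCospan (presheafToSheaf J AddCommGrpCat.{u}) :=
    PreservesFiniteLimits.preservesFiniteLimits _
  haveI : (presheafToSheaf J AddCommGrpCat.{u}).PreservesMonomorphisms :=
    preservesMonomorphisms_of_preservesLimitsOfShape _
  show Mono ((presheafToSheaf J AddCommGrpCat.{u}).map (presheafTensorMap F.val f.hom))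
  exact Functor.map_mono _ _

/-! ### The constant presheaf `ℤ` and its sheafification -/

/-- The constant presheaf with value `ℤ`. -/
noncomputable def ZP : Cᵒᵖ ⥤ AddCommGrpCat.{u} :=
  (Functor.const Cᵒᵖ).obj (AddCommGrpCat.of (ULift.{u} ℤ))

lemma mono_zsmul_id_ZP (n : ℤ) (hn : 0 < n) : Mono (n • 𝟙 (ZP (C := C))) := by
  haveI : ∀ (U : Cᵒᵖ), Mono ((n • 𝟙 (ZP (C := C))).app U) := by
    intro U
    rw [AddCommGrpCat.mono_iff_injective]
    rw [NatTrans.app_zsmul]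
    intro a b hab
    have hab' : n • a = n • b := hab
    have : n • a.down = n • b.down := congrArg ULift.down hab'
    rw [zsmul_eq_mul, zsmul_eq_mul] at this
    have hn' : (n : ℤ) ≠ 0 := by omega
    exact ULift.ext a b (mul_left_cancel₀ hn' this)
  exact NatTrans.mono_of_mono_app _

/-! ### The internal endomorphism presheaf -/

/-- Families of endomorphisms of `F` over all objects mapping to `U`, compatible with
restriction. -/
def endFam (F : Sheaf J AddCommGrpCat.{u}) (U : C) :
    AddSubgroup (∀ (V : C), (V ⟶ U) →
      ((F.val.obj (op V) : Type u) →+ (F.val.obj (op V) : Type u))) where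
  carrier := {α | ∀ (V W : C) (g : V ⟶ U) (h : W ⟶ V) (m : F.val.obj (op V)),
      α W (h ≫ g) ((F.val.map h.op) m) = (F.val.map h.op) (α V g m)}
  add_mem' := fun {α β} hα hβ => by
    intro V W g h m
    simp only [Pi.add_apply, AddMonoidHom.add_apply, map_add, hα V W g h m, hβ V W g h m]
  zero_mem' := by
    intro V W g h m
    simp
  neg_mem' := fun {α} hα => by
    intro V W g h m
    simp only [Pi.neg_apply, AddMonoidHom.neg_apply, map_neg, hα V W g h m]

/-- The internal endomorphism presheaf of `F`. -/
noncomputable def EndP (F : Sheaf J AddCommGrpCat.{u}) : Cᵒᵖ ⥤ AddCommGrpCat.{u} where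
  obj U := AddCommGrpCat.of (endFam J F (unop U))
  map {U V} f := AddCommGrpCat.ofHom
    { toFun := fun α => ⟨fun W h => α.1 W (h ≫ f.unop), by
        intro V' W' g h m
        have := α.2 V' W' (g ≫ f.unop) h m
        simpa [Category.assoc] using this⟩
      map_zero' := rfl
      map_add' := fun α β => rfl }
  map_id U := by
    refine AddCommGrpCat.ext fun α => ?_
    refine Subtype.ext (funext fun W => funext fun h => ?_)
    show α.1 W (h ≫ (𝟙 U).unop) = α.1 W h
    rw [unop_id, Category.comp_id]
  map_comp {U V W'} f g := by
    refine AddCommGrpCat.ext fun α => ?_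
    refine Subtype.ext (funext fun W => funext fun h => ?_)
    show α.1 W (h ≫ (f ≫ g).unop) = α.1 W ((h ≫ g.unop) ≫ f.unop)
    rw [unop_comp, Category.assoc]

/-- Congruence for families of elements along equal morphisms. -/
lemma famCongr {P : Cᵒᵖ ⥤ Type u} {X : C} {R : Presieve X}
    (x : Presieve.FamilyOfElements P R) {Y : C} {f g : Y ⟶ X} (e : f = g) (hf : R f) :
    x f hf = x g (e ▸ hf) := by subst e; rfl

lemma F_isTypeSheaf (F : Sheaf J AddCommGrpCat.{u}) :
    Presieve.IsSheaf J (F.val ⋙ forget AddCommGrpCat.{u}) := by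
  rw [← isSheaf_iff_isSheaf_of_type]
  exact (Presheaf.isSheaf_iff_isSheaf_forget J F.val (forget AddCommGrpCat)).1 F.cond

theorem endP_isSheaf (F : Sheaf J AddCommGrpCat.{u}) : Presheaf.IsSheaf J (EndP J F) := by
  rw [Presheaf.isSheaf_iff_isSheaf_forget J _ (forget AddCommGrpCat.{u}),
    isSheaf_iff_isSheaf_of_type]
  intro U S hS x hx
  have hFs := F_isTypeSheaf J F
  -- the local family attached to `g : V ⟶ U` and a section `m` over `V`
  let fam : ∀ {V : C} (g : V ⟶ U) (m : F.val.obj (op V)),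
      Presieve.FamilyOfElements (F.val ⋙ forget AddCommGrpCat.{u}) (S.pullback g).arrows :=
    fun {V} g m {W} h hh => ((x (h ≫ g) hh).1 W (𝟙 W)) ((F.val.map h.op) m)
  have hfam : ∀ {V : C} (g : V ⟶ U) (m : F.val.obj (op V)), (fam g m).Compatible := by
    intro V g m W₁ W₂ X k₁ k₂ h₁ h₂ hh₁ hh₂ e
    show (F.val.map k₁.op) (((x (h₁ ≫ g) hh₁).1 W₁ (𝟙 W₁)) ((F.val.map h₁.op) m))
      = (F.val.map k₂.op) (((x (h₂ ≫ g) hh₂).1 W₂ (𝟙 W₂)) ((F.val.map h₂.op) m))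
    have n₁ := (x (h₁ ≫ g) hh₁).2 W₁ X (𝟙 W₁) k₁ ((F.val.map h₁.op) m)
    have n₂ := (x (h₂ ≫ g) hh₂).2 W₂ X (𝟙 W₂) k₂ ((F.val.map h₂.op) m)
    rw [← n₁, ← n₂]
    have hcomm : k₁ ≫ (h₁ ≫ g) = k₂ ≫ (h₂ ≫ g) := by
      rw [← Category.assoc, ← Category.assoc, e]
    have hxc := hx k₁ k₂ hh₁ hh₂ hcomm
    have hval : ∀ (z : F.val.obj (op X)),
        ((x (h₁ ≫ g) hh₁).1 X (𝟙 X ≫ k₁)) z = ((x (h₂ ≫ g) hh₂).1 X (𝟙 X ≫ k₂)) z :=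
      fun z => congrArg
        (fun γ : (EndP J F ⋙ forget AddCommGrpCat.{u}).obj (op X) => (γ.1 X (𝟙 X)) z) hxc
    simp only [Category.id_comp] at hval
    have e₁ : (F.val.map k₁.op) ((F.val.map h₁.op) m) = (F.val.map ((k₁ ≫ h₁).op)) m := by
      rw [op_comp, F.val.map_comp]; rfl
    have e₂ : (F.val.map k₂.op) ((F.val.map h₂.op) m) = (F.val.map ((k₂ ≫ h₂).op)) m := by
      rw [op_comp, F.val.map_comp]; rfl
    have e₃ : (F.val.map ((k₁ ≫ h₁).op)) m = (F.val.map ((k₂ ≫ h₂).op)) m := by rw [e]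
    simp only [Category.comp_id]
    rw [e₁, e₂, e₃]
    exact hval _
  let amalg : ∀ {V : C} (g : V ⟶ U), F.val.obj (op V) → F.val.obj (op V) :=
    fun {V} g m => (hFs _ (J.pullback_stable g hS)).amalgamate (fam g m) (hfam g m)
  have amalg_spec : ∀ {V : C} (g : V ⟶ U) {W : C} (h : W ⟶ V) (hh : S.arrows (h ≫ g))
      (m : F.val.obj (op V)),
      (F.val.map h.op) (amalg g m) = ((x (h ≫ g) hh).1 W (𝟙 W)) ((F.val.map h.op) m) :=
    fun {V} g {W} h hh m => (hFs _ (J.pullback_stable g hS)).valid_glue (hfam g m) h hh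
  have sep : ∀ {V : C} (T : Sieve V), T ∈ J V → ∀ (t₁ t₂ : F.val.obj (op V)),
      (∀ {W : C} (h : W ⟶ V), T.arrows h → (F.val.map h.op) t₁ = (F.val.map h.op) t₂) →
      t₁ = t₂ :=
    fun {V} T hT t₁ t₂ hc => (hFs T hT).isSeparatedFor.ext (fun W h hh => hc h hh)
  have amalg_add : ∀ {V : C} (g : V ⟶ U) (m₁ m₂ : F.val.obj (op V)),
      amalg g (m₁ + m₂) = amalg g m₁ + amalg g m₂ := by
    intro V g m₁ m₂
    refine sep _ (J.pullback_stable g hS) _ _ ?_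
    intro W h hh
    have hs := amalg_spec g h hh
    simp only [map_add, hs]
  have amalg_nat : ∀ {V W : C} (g : V ⟶ U) (h : W ⟶ V) (m : F.val.obj (op V)),
      amalg (h ≫ g) ((F.val.map h.op) m) = (F.val.map h.op) (amalg g m) := by
    intro V W g h m
    refine sep _ (J.pullback_stable (h ≫ g) hS) _ _ ?_
    intro X k hk
    have hk' : S.arrows ((k ≫ h) ≫ g) := by rw [Category.assoc]; exact hk
    rw [amalg_spec (h ≫ g) k hk]
    have e₁ : (F.val.map k.op) ((F.val.map h.op) (amalg g m))
        = (F.val.map ((k ≫ h).op)) (amalg g m) := by rw [op_comp, F.val.map_comp]; rfl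
    rw [e₁, amalg_spec g (k ≫ h) hk' m]
    have e₂ : (F.val.map k.op) ((F.val.map h.op) m) = (F.val.map ((k ≫ h).op)) m := by
      rw [op_comp, F.val.map_comp]; rfl
    rw [e₂]
    have e₃ : k ≫ (h ≫ g) = (k ≫ h) ≫ g := by rw [Category.assoc]
    rw [famCongr x e₃ hk]
  let A : (EndP J F ⋙ forget AddCommGrpCat.{u}).obj (op U) :=
    ⟨fun V g => AddMonoidHom.mk' (fun m => amalg g m) (amalg_add g),
     fun V W g h m => amalg_nat g h m⟩
  refine ⟨A, ?_, ?_⟩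
  · intro V g hg
    refine Subtype.ext (funext fun W => funext fun h => AddMonoidHom.ext fun m => ?_)
    show amalg (h ≫ g) m = ((x g hg).1 W h) m
    refine sep _ (J.pullback_stable (h ≫ g) hS) _ _ ?_
    intro X k hk
    rw [amalg_spec (h ≫ g) k hk]
    rw [← (x g hg).2 W X h k m]
    have hcomm : 𝟙 X ≫ (k ≫ (h ≫ g)) = (k ≫ h) ≫ g := by simp
    have hxc := hx (𝟙 X) (k ≫ h) hk hg hcomm
    have hval : ((x (k ≫ (h ≫ g)) hk).1 X (𝟙 X ≫ 𝟙 X)) ((F.val.map k.op) m)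
        = ((x g hg).1 X (𝟙 X ≫ (k ≫ h))) ((F.val.map k.op) m) :=
      congrArg (fun γ : (EndP J F ⋙ forget AddCommGrpCat.{u}).obj (op X) =>
        (γ.1 X (𝟙 X)) ((F.val.map k.op) m)) hxc
    simpa only [Category.id_comp] using hval
  · intro t ht
    refine Subtype.ext (funext fun V => funext fun g => AddMonoidHom.ext fun m => ?_)
    show (t.1 V g) m = amalg g m
    refine sep _ (J.pullback_stable g hS) _ _ ?_
    intro W h hh
    rw [amalg_spec g h hh m]
    rw [← t.2 V W g h m]
    have hval : (t.1 W (𝟙 W ≫ (h ≫ g))) ((F.val.map h.op) m)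
        = ((x (h ≫ g) hh).1 W (𝟙 W)) ((F.val.map h.op) m) :=
      congrArg (fun γ : (EndP J F ⋙ forget AddCommGrpCat.{u}).obj (op W) =>
        (γ.1 W (𝟙 W)) ((F.val.map h.op) m)) (ht (h ≫ g) hh)
    simpa only [Category.id_comp] using hval

/-- The identity family of endomorphisms. -/
def idEnd (F : Sheaf J AddCommGrpCat.{u}) (U : C) : endFam J F U :=
  ⟨fun _ _ => AddMonoidHom.id _, fun _ _ _ _ _ => rfl⟩

/-- The unit morphism from the constant presheaf `ℤ` to the endomorphism presheaf. -/
noncomputable def oneEnd (F : Sheaf J AddCommGrpCat.{u}) : ZP (C := C) ⟶ EndP J F where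
  app U := AddCommGrpCat.ofHom
    { toFun := fun k => k.down • (idEnd J F (unop U))
      map_zero' := by simp
      map_add' := fun k l => by
        show (k.down + l.down) • _ = _
        rw [add_smul] }
  naturality U V f := by
    refine AddCommGrpCat.ext fun k => ?_
    show k.down • (idEnd J F (unop V)) = (EndP J F).map f (k.down • (idEnd J F (unop U)))
    exact (map_zsmul (ConcreteCategory.hom ((EndP J F).map f)) k.down (idEnd J F (unop U))).symm

/-- The action morphism from the sheafification of the constant presheaf to `EndP`. -/
noncomputable def lamP (F : Sheaf J AddCommGrpCat.{u}) :
    ((presheafToSheaf J AddCommGrpCat.{u}).obj (ZP (C := C))).val ⟶ EndP J F :=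
  sheafifyLift J (oneEnd J F) (endP_isSheaf J F)

/-- The bilinear evaluation pairing. -/
noncomputable def bilP (F : Sheaf J AddCommGrpCat.{u}) (U : Cᵒᵖ) :
    (F.val.obj U : Type u) →ₗ[ℤ]
      ((((presheafToSheaf J AddCommGrpCat.{u}).obj (ZP (C := C))).val.obj U : Type u) →ₗ[ℤ]
        (F.val.obj U : Type u)) :=
  LinearMap.mk₂ ℤ (fun m z => ((((lamP J F).app U z).1 (unop U)) (𝟙 (unop U))) m)
    (fun m₁ m₂ _ => by exact map_add _ _ _)
    (fun c m _ => by exact AddMonoidHom.map_zsmul _ _ _)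
    (fun m z₁ z₂ => by
      have h : (lamP J F).app U (z₁ + z₂) = (lamP J F).app U z₁ + (lamP J F).app U z₂ :=
        map_add _ _ _
      show ((((lamP J F).app U (z₁ + z₂)).1 (unop U)) (𝟙 (unop U))) m
        = ((((lamP J F).app U z₁).1 (unop U)) (𝟙 (unop U))) m
          + ((((lamP J F).app U z₂).1 (unop U)) (𝟙 (unop U))) m
      rw [h]; rfl)
    (fun c m z => by
      have h : (lamP J F).app U (c • z) = c • (lamP J F).app U z :=
        AddMonoidHom.map_zsmul _ _ _
      show ((((lamP J F).app U (c • z)).1 (unop U)) (𝟙 (unop U))) m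
        = c • ((((lamP J F).app U z).1 (unop U)) (𝟙 (unop U))) m
      rw [h]; rfl)

/-- The evaluation morphism `F ⊗ Z ⟶ F` at the presheaf level. -/
noncomputable def rhoP (F : Sheaf J AddCommGrpCat.{u}) :
    presheafTensorObj F.val ((presheafToSheaf J AddCommGrpCat.{u}).obj (ZP (C := C))).val ⟶
      F.val where
  app U := AddCommGrpCat.ofHom (TensorProduct.lift (bilP J F U)).toAddMonoidHom
  naturality {U V} f := by
    refine AddCommGrpCat.ext fun t => ?_
    refine TensorProduct.induction_on t (by exact (map_zero _).trans (map_zero _).symm) ?_ ?_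
    · intro m z
      show (TensorProduct.lift (bilP J F V))
          ((F.val.map f) m ⊗ₜ[ℤ]
            (((presheafToSheaf J AddCommGrpCat.{u}).obj (ZP (C := C))).val.map f) z)
        = (F.val.map f) ((TensorProduct.lift (bilP J F U)) (m ⊗ₜ[ℤ] z))
      have hnat : (lamP J F).app V
            ((((presheafToSheaf J AddCommGrpCat.{u}).obj (ZP (C := C))).val.map f) z)
          = (EndP J F).map f ((lamP J F).app U z) :=
        ConcreteCategory.congr_hom ((lamP J F).naturality f) z
      show ((((lamP J F).app V
          ((((presheafToSheaf J AddCommGrpCat.{u}).obj (ZP (C := C))).val.map f) z)).1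
            (unop V)) (𝟙 (unop V))) ((F.val.map f) m)
        = (F.val.map f) (((((lamP J F).app U z).1 (unop U)) (𝟙 (unop U))) m)
      rw [hnat]
      show ((((lamP J F).app U z).1 (unop V)) (𝟙 (unop V) ≫ f.unop)) ((F.val.map f) m)
        = (F.val.map f) (((((lamP J F).app U z).1 (unop U)) (𝟙 (unop U))) m)
      rw [Category.id_comp]
      have hα := ((lamP J F).app U z).2 (unop U) (unop V) (𝟙 (unop U)) f.unop m
      rw [Category.comp_id] at hα
      exact hα
    · intro a b ha hb
      exact (map_add _ a b).trans ((congrArg₂ (· + ·) ha hb).trans (map_add _ a b).symm)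

/-- The coevaluation `F ⟶ F ⊗ Z` at the presheaf level. -/
noncomputable def wP (F : Sheaf J AddCommGrpCat.{u}) :
    F.val ⟶
      presheafTensorObj F.val ((presheafToSheaf J AddCommGrpCat.{u}).obj (ZP (C := C))).val where
  app U := AddCommGrpCat.ofHom
    (AddMonoidHom.mk'
      (fun m => m ⊗ₜ[ℤ] ((toSheafify J (ZP (C := C))).app U (ULift.up 1)))
      (fun a b => TensorProduct.add_tmul a b _))
  naturality {U V} f := by
    refine AddCommGrpCat.ext fun m => ?_
    have h := ConcreteCategory.congr_hom ((toSheafify J (ZP (C := C))).naturality f) (ULift.up (1 : ℤ))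
    show (F.val.map f) m ⊗ₜ[ℤ] ((toSheafify J (ZP (C := C))).app V (ULift.up 1))
      = (F.val.map f) m ⊗ₜ[ℤ]
        ((((presheafToSheaf J AddCommGrpCat.{u}).obj (ZP (C := C))).val.map f)
          ((toSheafify J (ZP (C := C))).app U (ULift.up 1)))
    exact congrArg (fun z => (F.val.map f) m ⊗ₜ[ℤ] z) h

lemma w_rho (F : Sheaf J AddCommGrpCat.{u}) : wP J F ≫ rhoP J F = 𝟙 F.val := by
  apply NatTrans.ext
  funext U
  refine AddCommGrpCat.ext fun m => ?_
  have h1 : toSheafify J (ZP (C := C)) ≫ lamP J F = oneEnd J F :=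
    toSheafify_sheafifyLift J (oneEnd J F) (endP_isSheaf J F)
  have h2 : (lamP J F).app U ((toSheafify J (ZP (C := C))).app U (ULift.up (1 : ℤ)))
      = (oneEnd J F).app U (ULift.up (1 : ℤ)) :=
    ConcreteCategory.congr_hom (congrArg (fun (φ : ZP (C := C) ⟶ EndP J F) => φ.app U) h1)
      (ULift.up (1 : ℤ))
  have h3 : (lamP J F).app U ((toSheafify J (ZP (C := C))).app U (ULift.up (1 : ℤ)))
      = idEnd J F (unop U) := by
    rw [h2]
    show ((1 : ℤ)) • idEnd J F (unop U) = idEnd J F (unop U)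
    exact one_smul _ _
  show ((((lamP J F).app U
      ((toSheafify J (ZP (C := C))).app U (ULift.up (1 : ℤ)))).1 (unop U)) (𝟙 (unop U))) m = m
  rw [h3]
  rfl

/-- Flat sheaves are torsion-free. -/
theorem sheafTorsionFree_of_flat {F : Sheaf J AddCommGrpCat.{u}} (hF : SheafFlat J F) :
    SheafTorsionFree J F := by
  intro n hn
  set Z : Sheaf J AddCommGrpCat.{u} := (presheafToSheaf J AddCommGrpCat.{u}).obj (ZP (C := C))
    with hZ
  have hmono : Mono (n • 𝟙 Z) := by
    have e : (n • 𝟙 Z) = (presheafToSheaf J AddCommGrpCat.{u}).map (n • 𝟙 (ZP (C := C))) := by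
      rw [Functor.map_zsmul, CategoryTheory.Functor.map_id]
    rw [e]
    haveI := mono_zsmul_id_ZP (C := C) n (by omega)
    haveI : PreservesLimitsOfShape WalkingCospan (presheafToSheaf J AddCommGrpCat.{u}) :=
      PreservesFiniteLimits.preservesFiniteLimits _
    haveI : (presheafToSheaf J AddCommGrpCat.{u}).PreservesMonomorphisms :=
      preservesMonomorphisms_of_preservesLimitsOfShape _
    exact Functor.map_mono _ _
  have hT := hF _ hmono
  have hval : presheafTensorMap F.val (n • 𝟙 Z).hom
      = n • 𝟙 (presheafTensorObj F.val Z.val) := by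
    apply NatTrans.ext
    funext U
    refine AddCommGrpCat.ext fun t => ?_
    have happ : (n • 𝟙 (presheafTensorObj F.val Z.val)).app U
        = n • 𝟙 ((presheafTensorObj F.val Z.val).obj U) := NatTrans.app_zsmul U _ n
    rw [happ]
    refine TensorProduct.induction_on t (by exact (map_zero _).trans (map_zero _).symm) ?_ ?_
    · intro m z
      show m ⊗ₜ[ℤ] ((n • 𝟙 Z).hom.app U z) = n • (m ⊗ₜ[ℤ] z)
      show m ⊗ₜ[ℤ] (n • z) = n • (m ⊗ₜ[ℤ] z)
      exact TensorProduct.tmul_smul n m z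
    · intro a b ha hb
      exact (map_add _ a b).trans ((congrArg₂ (· + ·) ha hb).trans (map_add _ a b).symm)
  have hTeq : sheafTensorMap J F (n • 𝟙 Z) = n • 𝟙 (sheafTensorObj J F Z) := by
    show (presheafToSheaf J AddCommGrpCat.{u}).map (presheafTensorMap F.val (n • 𝟙 Z).hom)
      = n • 𝟙 (sheafTensorObj J F Z)
    rw [hval, Functor.map_zsmul, CategoryTheory.Functor.map_id]
    rfl
  rw [hTeq] at hT
  let ι : F ⟶ sheafTensorObj J F Z :=
    ⟨wP J F ≫ toSheafify J (presheafTensorObj F.val Z.val)⟩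
  let r : sheafTensorObj J F Z ⟶ F := ⟨sheafifyLift J (rhoP J F) F.cond⟩
  have hsec : ι ≫ r = 𝟙 F := by
    apply Sheaf.hom_ext
    show (wP J F ≫ toSheafify J (presheafTensorObj F.val Z.val)) ≫
        sheafifyLift J (rhoP J F) F.cond = 𝟙 F.val
    rw [Category.assoc, toSheafify_sheafifyLift]
    exact w_rho J F
  haveI : IsSplitMono ι := IsSplitMono.mk' ⟨r, hsec⟩
  haveI hcm : Mono (ι ≫ (n • 𝟙 (sheafTensorObj J F Z))) := mono_comp _ _
  have hre : (n • 𝟙 F) ≫ ι = ι ≫ (n • 𝟙 (sheafTensorObj J F Z)) := by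
    rw [Preadditive.zsmul_comp, Preadditive.comp_zsmul, Category.id_comp, Category.comp_id]
  haveI : Mono ((n • 𝟙 F) ≫ ι) := by rw [hre]; exact hcm
  exact mono_of_mono (n • 𝟙 F) ι

end SheafFlatAux

theorem sheaf_flat_iff_torsionFree (F : Sheaf J AddCommGrpCat.{u}) :
    SheafFlat J F ↔ SheafTorsionFree J F :=
  ⟨fun h => SheafFlatAux.sheafTorsionFree_of_flat J h,
   fun h => SheafFlatAux.flat_of_sheafTorsionFree J h⟩
end

section
/- Let (C, J) be a small site and let F be a sheaf of abelian groups on (C, J). Then there exists a short exact sequence 0 → P₁ → P₀ → F → 0 in the abelian category of sheaves of abelian groups on (C, J) in which both P₀ and P₁ are torsion-free (equivalently, flat) sheaves. In particular, the category of abelian sheaves has Tor-dimension ≤ 1: every abelian sheaf admits a flat resolution of length 1. -/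
/-!
STATEMENT 7: Every sheaf of abelian groups `F` on a small site `(C, J)` fits into a short
exact sequence `0 → P₁ → P₀ → F → 0` of abelian sheaves in which both `P₀` and `P₁` are
torsion-free (equivalently, flat) sheaves.  In particular every abelian sheaf admits a
flat resolution of length `1`.
-/

open CategoryTheory Limits Opposite

universe u

variable {C : Type u} [SmallCategory C] (J : GrothendieckTopology C)

lemma freeAbelian_smul_mono (A : Type u) (n : ℤ) (hn : 1 ≤ n) :
    Mono (n • 𝟙 (AddCommGrpCat.free.obj A)) := by
  haveI := (FreeAbelianGroup.basis A).isTorsionFree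
  rw [AddCommGrpCat.mono_iff_injective]
  intro x y h
  have hx : n • x = n • y := h
  exact smul_right_injective (FreeAbelianGroup A) (by omega) hx

theorem exists_torsionFree_resolution (F : Sheaf J AddCommGrpCat.{u}) :
    ∃ (P₁ P₀ : Sheaf J AddCommGrpCat.{u}) (i : P₁ ⟶ P₀) (p : P₀ ⟶ F) (w : i ≫ p = 0),
      (ShortComplex.mk i p w).ShortExact ∧
      SheafTorsionFree J P₀ ∧ SheafTorsionFree J P₁ := by
  classical
  -- the objectwise free presheaf on the underlying presheaf of sets of `F`
  let G : Cᵒᵖ ⥤ AddCommGrpCat.{u} := F.val ⋙ (forget AddCommGrpCat ⋙ AddCommGrpCat.free)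
  let φ : G ⟶ F.val :=
    Functor.whiskerLeft F.val AddCommGrpCat.adj.counit ≫ (Functor.rightUnitor F.val).hom
  haveI : ∀ c : Cᵒᵖ, Epi (φ.app c) := by
    intro c
    dsimp [φ]
    infer_instance
  haveI : Epi φ := NatTrans.epi_of_epi_app φ
  -- sheafify
  let P₀ : Sheaf J AddCommGrpCat.{u} := (presheafToSheaf J AddCommGrpCat.{u}).obj G
  let p : P₀ ⟶ F :=
    (presheafToSheaf J AddCommGrpCat.{u}).map φ ≫
      (sheafificationAdjunction J AddCommGrpCat.{u}).counit.app F
  haveI : Epi p := epi_comp _ _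
  let P₁ : Sheaf J AddCommGrpCat.{u} := kernel p
  let i : P₁ ⟶ P₀ := kernel.ι p
  have w : i ≫ p = 0 := kernel.condition p
  -- torsion-freeness of P₀
  have hG : ∀ n : ℤ, 1 ≤ n → Mono (n • 𝟙 G) := by
    intro n hn
    haveI : ∀ c : Cᵒᵖ, Mono ((n • 𝟙 G).app c) := by
      intro c
      rw [NatTrans.app_zsmul, NatTrans.id_app]
      exact freeAbelian_smul_mono _ n hn
    exact NatTrans.mono_of_mono_app _
  have hP₀ : SheafTorsionFree J P₀ := by
    intro n hn
    haveI := hG n hn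
    have : (n • 𝟙 P₀) = (presheafToSheaf J AddCommGrpCat.{u}).map (n • 𝟙 G) := by
      rw [Functor.map_zsmul, CategoryTheory.Functor.map_id (presheafToSheaf J AddCommGrpCat.{u}) G]
    rw [this]
    exact Functor.map_mono _ _
  have hP₁ : SheafTorsionFree J P₁ := by
    intro n hn
    haveI := hP₀ n hn
    haveI : Mono ((n • 𝟙 P₁) ≫ i) := by
      have : (n • 𝟙 P₁) ≫ i = i ≫ (n • 𝟙 P₀) := by
        simp [Preadditive.zsmul_comp, Preadditive.comp_zsmul]
      rw [this]
      exact mono_comp _ _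
    exact mono_of_mono _ i
  refine ⟨P₁, P₀, i, p, w, ?_, hP₀, hP₁⟩
  exact { exact := ShortComplex.exact_of_f_is_kernel _ (kernelIsKernel p) }
end

section
/- Let (C, J) be a small site. For every bounded-below cochain complex X of sheaves of abelian groups on (C, J) there exists a bounded-below cochain complex P of torsion-free (equivalently, flat) sheaves of abelian groups and a quasi-isomorphism P ⟶ X. -/
/-!
STATEMENT 10: For every bounded-below cochain complex `X` of sheaves of abelian groups on
a small site `(C, J)` there exists a bounded-below cochain complex `P` of torsion-free
(equivalently flat) sheaves together with a quasi-isomorphism `P ⟶ X`.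
-/

open CategoryTheory Limits Opposite

universe u

variable {C : Type u} [SmallCategory C] (J : GrothendieckTopology C)

section Aux

variable {J}

/-- Torsion-freeness passes to subobjects. -/
lemma sheafTorsionFree_of_mono {F G : Sheaf J AddCommGrpCat.{u}} (i : F ⟶ G) [Mono i]
    (hG : SheafTorsionFree J G) : SheafTorsionFree J F := by
  intro n hn
  have : Mono (n • 𝟙 G) := hG n hn
  have h : (n • 𝟙 F) ≫ i = i ≫ (n • 𝟙 G) := by simp
  have : Mono ((n • 𝟙 F) ≫ i) := by rw [h]; exact mono_comp _ _
  exact mono_of_mono (n • 𝟙 F) i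

lemma sheafTorsionFree_biprod {F G : Sheaf J AddCommGrpCat.{u}}
    (hF : SheafTorsionFree J F) (hG : SheafTorsionFree J G) :
    SheafTorsionFree J (F ⊞ G) := by
  intro n hn
  have hF' : Mono (n • 𝟙 F) := hF n hn
  have hG' : Mono (n • 𝟙 G) := hG n hn
  refine ⟨fun {W} g h e => ?_⟩
  apply biprod.hom_ext
  · rw [← cancel_mono (n • 𝟙 F)]
    have := congrArg (fun φ => φ ≫ biprod.fst) e
    simpa [Preadditive.comp_zsmul, Preadditive.zsmul_comp] using this
  · rw [← cancel_mono (n • 𝟙 G)]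
    have := congrArg (fun φ => φ ≫ biprod.snd) e
    simpa [Preadditive.comp_zsmul, Preadditive.zsmul_comp] using this

lemma isZero_biprod {A : Type*} [Category A] [Abelian A] {F G : A}
    (hF : IsZero F) (hG : IsZero G) : IsZero (F ⊞ G) := by
  rw [IsZero.iff_id_eq_zero]
  apply biprod.hom_ext
  · exact hF.eq_of_tgt _ _
  · exact hG.eq_of_tgt _ _

/-- Free abelian groups have no `ℤ`-torsion. -/
lemma freeAbelianGroup_zsmul_inj (X : Type u) {n : ℤ} (hn : 1 ≤ n)
    {x : FreeAbelianGroup X} (h : n • x = 0) : x = 0 := by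
  have h2 : FreeAbelianGroup.toFinsupp (n • x) = 0 := by rw [h]; simp
  rw [map_zsmul] at h2
  have h3 : FreeAbelianGroup.toFinsupp x = 0 := by
    ext a
    have := congrArg (fun f => (Finsupp.applyAddHom (M := ℤ) a) f) h2
    simp only [map_zsmul, Finsupp.applyAddHom_apply] at this
    simp only [Finsupp.coe_zero, Pi.zero_apply]
    have h4 : n • (FreeAbelianGroup.toFinsupp x) a = 0 := by simpa using this
    rw [zsmul_eq_mul] at h4
    exact (mul_eq_zero.1 h4).resolve_left (fun h0 => by simp only [Int.cast_id] at h0; omega)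
  rw [← Finsupp.toFreeAbelianGroup_toFinsupp x, h3, map_zero]

/-- Every abelian sheaf admits an epimorphism from a torsion-free sheaf (which may be
taken to be zero if the sheaf is zero). -/
lemma exists_torsionFree_epi (A : Sheaf J AddCommGrpCat.{u}) :
    ∃ (T : Sheaf J AddCommGrpCat.{u}) (t : T ⟶ A),
      Epi t ∧ SheafTorsionFree J T ∧ (IsZero A → IsZero T) := by
  by_cases hA : IsZero A
  · exact ⟨A, 𝟙 A, inferInstance,
      fun _ _ => ⟨fun g h' _ => hA.eq_of_tgt g h'⟩, fun _ => hA⟩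
  · -- the sheafification of the free presheaf on the sections of `A`
    let P : Cᵒᵖ ⥤ AddCommGrpCat.{u} :=
      A.val ⋙ (forget AddCommGrpCat.{u} ⋙ AddCommGrpCat.free.{u})
    let ε : P ⟶ A.val :=
      Functor.whiskerLeft A.val AddCommGrpCat.adj.counit ≫ A.val.rightUnitor.hom
    have hε : ∀ U, Epi (ε.app U) := by
      intro U
      rw [AddCommGrpCat.epi_iff_surjective]
      intro x
      refine ⟨FreeAbelianGroup.of x, ?_⟩
      show (AddCommGrpCat.adj.counit.app (A.val.obj U) ≫ 𝟙 _) (FreeAbelianGroup.of x) = x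
      simp only [Category.comp_id]
      simp [AddCommGrpCat.adj, ConcreteCategory.homEquiv]
      exact FreeAbelianGroup.lift_apply_of (fun y => y) x
    haveI : ∀ U, Epi (ε.app U) := hε
    have hεepi : Epi ε := NatTrans.epi_of_epi_app ε
    have hPtf : ∀ (n : ℤ), 1 ≤ n → Mono (n • 𝟙 P) := by
      intro n hn
      have : ∀ U, Mono ((n • 𝟙 P).app U) := by
        intro U
        rw [NatTrans.app_zsmul]
        rw [AddCommGrpCat.mono_iff_injective]
        intro x y hxy
        have h5 : n • (x - y) =
            (0 : FreeAbelianGroup ((forget AddCommGrpCat).obj (A.val.obj U))) := by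
          have : n • x = n • y := hxy
          rw [smul_sub, this, sub_self]; rfl
        have := freeAbelianGroup_zsmul_inj _ hn h5
        exact sub_eq_zero.1 this
      exact NatTrans.mono_of_mono_app _
    refine ⟨(presheafToSheaf J AddCommGrpCat.{u}).obj P,
      ((sheafificationAdjunction J AddCommGrpCat.{u}).homEquiv P A).symm ε, ?_, ?_,
      fun h => absurd h hA⟩
    · rw [Adjunction.homEquiv_counit]
      haveI := Functor.preservesEpimorphisms_of_adjunction (sheafificationAdjunction J AddCommGrpCat.{u})
      infer_instance
    · intro n hn
      have heq : (presheafToSheaf J AddCommGrpCat.{u}).map (n • 𝟙 P) =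
          n • 𝟙 ((presheafToSheaf J AddCommGrpCat.{u}).obj P) := by
        rw [Functor.map_zsmul]
        congr 1
        exact (presheafToSheaf J AddCommGrpCat.{u}).map_id P
      rw [← heq]
      have := hPtf n hn
      infer_instance

variable {A : Type*} [Category A] [Abelian A]

/-- The "termwise cover" complex: `F.X i = T i ⊞ T (i-1)` with differential `(a,b) ↦ (0,a)`. -/
noncomputable def coverComplex (T : ℤ → A) : CochainComplex A ℤ where
  X i := T i ⊞ T (i - 1)
  d i j :=
    if h : i + 1 = j then
      biprod.fst ≫ eqToHom (congrArg T (by omega : i = j - 1)) ≫ biprod.inr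
    else 0
  shape i j h := dif_neg h
  d_comp_d' i j k hij hjk := by
    simp only [ComplexShape.up_Rel] at hij hjk
    rw [dif_pos hij, dif_pos hjk]
    simp

lemma coverComplex_isZero (T : ℤ → A) (i : ℤ) (h1 : IsZero (T i)) (h2 : IsZero (T (i-1))) :
    IsZero ((coverComplex T).X i) :=
  isZero_biprod h1 h2

/-- The canonical chain map from the cover complex. -/
noncomputable def coverHom (X : CochainComplex A ℤ) (T : ℤ → A) (t : ∀ i, T i ⟶ X.X i) :
    coverComplex T ⟶ X where
  f i := biprod.desc (t i) (t (i - 1) ≫ X.d (i - 1) i)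
  comm' i j hij := by
    simp only [ComplexShape.up_Rel] at hij
    show biprod.desc _ _ ≫ X.d i j = (if h : i + 1 = j then
      (biprod.fst ≫ eqToHom (congrArg T (by omega : i = j - 1)) ≫ biprod.inr :
        T i ⊞ T (i - 1) ⟶ T j ⊞ T (j - 1)) else 0) ≫ _
    rw [dif_pos hij]
    apply biprod.hom_ext'
    · have hj : i = j - 1 := by omega
      have h1 : eqToHom (congrArg T hj) ≫ t (j - 1) = t i ≫ eqToHom (congrArg X.X hj) := by
        subst hj; simp
      have h2 : eqToHom (congrArg X.X hj) ≫ X.d (j - 1) j = X.d i j := by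
        subst hj; simp
      simp only [Category.assoc, biprod.inl_desc_assoc, biprod.inl_fst_assoc, biprod.inr_desc]
      rw [← Category.assoc, h1, Category.assoc, h2]
    · simp

lemma coverHom_epi (X : CochainComplex A ℤ) (T : ℤ → A) (t : ∀ i, T i ⟶ X.X i)
    (he : ∀ i, Epi (t i)) : Epi (coverHom X T t) := by
  apply HomologicalComplex.epi_of_epi_f
  intro i
  haveI := he i
  have : Epi (biprod.inl ≫ (coverHom X T t).f i) := by
    show Epi (biprod.inl ≫ biprod.desc (t i) (t (i - 1) ≫ X.d (i - 1) i))
    rw [biprod.inl_desc]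
    infer_instance
  exact epi_of_epi biprod.inl _

end Aux

theorem exists_boundedBelow_torsionFree_quasiIso
    (X : CochainComplex (Sheaf J AddCommGrpCat.{u}) ℤ)
    (hX : ∃ n : ℤ, ∀ i < n, IsZero (X.X i)) :
    ∃ (P : CochainComplex (Sheaf J AddCommGrpCat.{u}) ℤ),
      (∃ m : ℤ, ∀ i < m, IsZero (P.X i)) ∧
      (∀ i : ℤ, SheafTorsionFree J (P.X i)) ∧
      ∃ (f : P ⟶ X), QuasiIso f := by
  obtain ⟨n, hn⟩ := hX
  choose T t ht htf hz using fun i => exists_torsionFree_epi (X.X i)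
  let F := coverComplex T
  let q : F ⟶ X := coverHom X T t
  haveI : Epi q := coverHom_epi X T t ht
  let S : ShortComplex (CochainComplex (Sheaf J AddCommGrpCat.{u}) ℤ) :=
    ShortComplex.mk (kernel.ι q) q (kernel.condition q)
  have hS : S.ShortExact :=
    { exact := ShortComplex.exact_kernel q
      mono_f := inferInstance
      epi_g := inferInstance }
  -- torsion-freeness of the terms of `F`
  have hFtf : ∀ j, SheafTorsionFree J (F.X j) :=
    fun j => sheafTorsionFree_biprod (htf j) (htf (j - 1))
  -- the terms of the kernel complex are torsion-free and suitably zero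
  haveI : Mono S.f := hS.mono_f
  have hKtf : ∀ j, SheafTorsionFree J (S.X₁.X j) :=
    fun j => sheafTorsionFree_of_mono (S.f.f j) (hFtf j)
  refine ⟨CochainComplex.mappingCone S.f, ⟨n - 1, fun i hi => ?_⟩, fun i => ?_,
    CochainComplex.mappingCone.descShortComplex S,
    CochainComplex.mappingCone.quasiIso_descShortComplex hS⟩
  · -- vanishing in degrees `< n - 1`
    have hrel : (ComplexShape.up ℤ).Rel i (i + 1) := rfl
    refine IsZero.of_iso ?_ (HomologicalComplex.homotopyCofiber.XIsoBiprod S.f i (i + 1) hrel)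
    have hF1 : IsZero (F.X (i + 1)) :=
      coverComplex_isZero T (i + 1) (hz _ (hn _ (by omega))) (hz _ (hn _ (by omega)))
    have hF0 : IsZero (F.X i) :=
      coverComplex_isZero T i (hz _ (hn _ (by omega))) (hz _ (hn _ (by omega)))
    exact isZero_biprod (IsZero.of_mono (S.f.f (i + 1)) hF1) hF0
  · -- torsion-freeness
    have hrel : (ComplexShape.up ℤ).Rel i (i + 1) := rfl
    have e := HomologicalComplex.homotopyCofiber.XIsoBiprod S.f i (i + 1) hrel
    haveI : Mono e.hom := IsIso.mono_of_iso e.hom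
    exact @sheafTorsionFree_of_mono _ _ _ _ _ e.hom this
      (sheafTorsionFree_biprod (hKtf (i + 1)) (hFtf i))
end
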